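/- arXiv:2504.14646 — 5 statements merged into one kernel-verified Lean document; each statement's English description precedes it below -/
import Mathlib

section
/- Let Q be a power associative loop and suppose there exists a ∈ Q such that every element of Q can be written as aⁿ·z for some positive integer n and some z ∈ Z(Q) (this is the condition that Q/Z(Q) is a cyclic group generated by the coset of a). Then Q is an abelian group, i.e., the operation · is associative and commutative. -/
/-- A loop: a set with binary operation and identity element in which all left and
right translations are bijective. -/
class QLoop (Q : Type*) extends Mul Q, One Q where
  one_mul : ∀ x : Q, 1 * x = x
  mul_one : ∀ x : Q, x * 1 = x
  bij_left : ∀ a : Q, Function.Bijective (fun x : Q => a * x)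
  bij_right : ∀ a : Q, Function.Bijective (fun x : Q => x * a)

/-- The right Bol identity. -/
def IsRightBol (Q : Type*) [QLoop Q] : Prop :=
  ∀ x y z : Q, ((x * y) * z) * y = x * ((y * z) * y)

/-- Left translation as a permutation. -/
noncomputable def Lt {Q : Type*} [QLoop Q] (a : Q) : Equiv.Perm Q :=
  Equiv.ofBijective (fun x : Q => a * x) (QLoop.bij_left a)

/-- Right translation as a permutation. -/
noncomputable def Rt {Q : Type*} [QLoop Q] (a : Q) : Equiv.Perm Q :=
  Equiv.ofBijective (fun x : Q => x * a) (QLoop.bij_right a)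

/-- The right multiplication group. -/
noncomputable def rightMultGroup (Q : Type*) [QLoop Q] : Subgroup (Equiv.Perm Q) :=
  Subgroup.closure (Set.range (Rt : Q → Equiv.Perm Q))

/-- The right inner mapping group, generated by R_{x,y} = R_{y x}⁻¹ ∘ R_x ∘ R_y. -/
noncomputable def rightInn (Q : Type*) [QLoop Q] : Subgroup (Equiv.Perm Q) :=
  Subgroup.closure { φ : Equiv.Perm Q | ∃ x y : Q, φ = (Rt (y * x))⁻¹ * Rt x * Rt y }

/-- The inner mapping group, generated by R_{x,y}, L_{x,y} and T_x. -/
noncomputable def innGroup (Q : Type*) [QLoop Q] : Subgroup (Equiv.Perm Q) :=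
  Subgroup.closure
    ({ φ : Equiv.Perm Q | ∃ x y : Q, φ = (Rt (y * x))⁻¹ * Rt x * Rt y } ∪
     { φ : Equiv.Perm Q | ∃ x y : Q, φ = (Lt (x * y))⁻¹ * Lt x * Lt y } ∪
     { φ : Equiv.Perm Q | ∃ x : Q, φ = (Lt x)⁻¹ * Rt x })

/-- A subloop: contains 1, closed under multiplication and both divisions. -/
structure IsSubloop {Q : Type*} [QLoop Q] (S : Set Q) : Prop where
  one_mem : (1 : Q) ∈ S
  mul_mem : ∀ ⦃a b : Q⦄, a ∈ S → b ∈ S → a * b ∈ S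
  ldiv_mem : ∀ ⦃a x : Q⦄, a ∈ S → a * x ∈ S → x ∈ S
  rdiv_mem : ∀ ⦃a y : Q⦄, a ∈ S → y * a ∈ S → y ∈ S

/-- A normal subloop: a subloop invariant under all inner mappings. -/
def IsNormalSubloop {Q : Type*} [QLoop Q] (S : Set Q) : Prop :=
  IsSubloop S ∧ ∀ φ ∈ innGroup Q, (φ : Equiv.Perm Q) '' S = S

/-- The commutant. -/
def commutant (Q : Type*) [QLoop Q] : Set Q := { a : Q | ∀ y : Q, a * y = y * a }

/-- The left nucleus. -/
def leftNucleus (Q : Type*) [QLoop Q] : Set Q :=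
  { a : Q | ∀ y z : Q, a * (y * z) = (a * y) * z }

/-- The center. -/
def loopCenter (Q : Type*) [QLoop Q] : Set Q :=
  { a : Q | ∀ y z : Q, a * y = y * a ∧ a * (y * z) = (a * y) * z ∧
      y * (a * z) = (y * a) * z ∧ y * (z * a) = (y * z) * a }

/-- Powers: x^0 = 1, x^{n+1} = x^n * x. -/
def lpow {Q : Type*} [QLoop Q] (x : Q) : ℕ → Q
  | 0 => 1
  | n + 1 => lpow x n * x

/-- The subloop generated by an element. -/
def subloopClosure {Q : Type*} [QLoop Q] (x : Q) : Set Q :=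
  ⋂₀ { S : Set Q | IsSubloop S ∧ x ∈ S }

/-- Power associativity: the subloop generated by any element is associative. -/
def PowerAssociative (Q : Type*) [QLoop Q] : Prop :=
  ∀ x : Q, ∀ a ∈ subloopClosure x, ∀ b ∈ subloopClosure x, ∀ c ∈ subloopClosure x,
    a * (b * c) = (a * b) * c

section Aux
variable {Q : Type*} [QLoop Q]

lemma center_comm {c : Q} (hc : c ∈ loopCenter Q) (y : Q) : c * y = y * c :=
  (hc y 1).1

lemma center_assoc1 {c : Q} (hc : c ∈ loopCenter Q) (y z : Q) :
    c * (y * z) = (c * y) * z := (hc y z).2.1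

lemma center_assoc2 {c : Q} (hc : c ∈ loopCenter Q) (y z : Q) :
    y * (c * z) = (y * c) * z := (hc y z).2.2.1

lemma center_assoc3 {c : Q} (hc : c ∈ loopCenter Q) (y z : Q) :
    y * (z * c) = (y * z) * c := (hc y z).2.2.2

lemma center_mul {c d : Q} (hc : c ∈ loopCenter Q) (hd : d ∈ loopCenter Q) :
    c * d ∈ loopCenter Q := by
  intro y z
  refine ⟨?_, ?_, ?_, ?_⟩
  · rw [← center_assoc2 hd, center_comm hd y, center_assoc1 hc, center_comm hc,
      center_assoc3 hd]
  · rw [← center_assoc2 hd, center_assoc1 hd, center_assoc1 hc, center_assoc1 hc]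
  · rw [← center_assoc2 hd, center_assoc2 hc, center_assoc2 hd, ← center_assoc3 hd y c]
  · rw [center_assoc3 hd, center_assoc3 hd, center_assoc3 hc, ← center_assoc3 hd]

lemma subloopClosure_isSubloop (x : Q) : IsSubloop (subloopClosure x) := by
  constructor
  · intro S hS; exact hS.1.one_mem
  · intro a b ha hb S hS
    exact hS.1.mul_mem (ha S hS) (hb S hS)
  · intro a b ha hab S hS
    exact hS.1.ldiv_mem (ha S hS) (hab S hS)
  · intro a b ha hab S hS
    exact hS.1.rdiv_mem (ha S hS) (hab S hS)

lemma mem_subloopClosure_self (x : Q) : x ∈ subloopClosure x := fun _ hS => hS.2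

lemma lpow_mem (x : Q) (n : ℕ) : lpow x n ∈ subloopClosure x := by
  induction n with
  | zero => exact (subloopClosure_isSubloop x).one_mem
  | succ n ih =>
      exact (subloopClosure_isSubloop x).mul_mem ih (mem_subloopClosure_self x)

lemma lpow_add (hpa : PowerAssociative Q) (a : Q) (m n : ℕ) :
    lpow a (m + n) = lpow a m * lpow a n := by
  induction n with
  | zero => simp [lpow, QLoop.mul_one]
  | succ n ih =>
      show lpow a (m + n) * a = lpow a m * (lpow a n * a)
      rw [ih, hpa a _ (lpow_mem a m) _ (lpow_mem a n) _ (mem_subloopClosure_self a)]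

lemma mul_form (hpa : PowerAssociative Q) (a : Q) (m n : ℕ) {z₁ z₂ : Q}
    (h₁ : z₁ ∈ loopCenter Q) (h₂ : z₂ ∈ loopCenter Q) :
    (lpow a m * z₁) * (lpow a n * z₂) = lpow a (m + n) * (z₁ * z₂) := by
  rw [center_assoc3 h₂, ← center_assoc2 h₁, center_comm h₁ (lpow a n),
    center_assoc3 h₁, ← lpow_add hpa, ← center_assoc3 h₂]

end Aux

/-- A power associative loop whose quotient by the center is cyclic
(every element is a positive power of a fixed element times a central element)
is an abelian group. -/
theorem stmt0 (Q : Type*) [QLoop Q] (hpa : PowerAssociative Q)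
    (a : Q) (hcyc : ∀ q : Q, ∃ n : ℕ, 0 < n ∧ ∃ z ∈ loopCenter Q, q = lpow a n * z) :
    (∀ x y z : Q, x * (y * z) = (x * y) * z) ∧ (∀ x y : Q, x * y = y * x) := by
  have key : ∀ x y : Q, ∀ zx ∈ loopCenter Q, ∀ zy ∈ loopCenter Q,
      ∀ m n : ℕ, x = lpow a m * zx → y = lpow a n * zy →
      x * y = lpow a (m + n) * (zx * zy) := by
    intro x y zx hzx zy hzy m n hx hy
    rw [hx, hy, mul_form hpa a m n hzx hzy]
  constructor
  · intro x y z
    obtain ⟨m, -, zx, hzx, hx⟩ := hcyc x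
    obtain ⟨n, -, zy, hzy, hy⟩ := hcyc y
    obtain ⟨k, -, zz, hzz, hz⟩ := hcyc z
    rw [key y z zy hzy zz hzz n k hy hz,
      key x _ zx hzx _ (center_mul hzy hzz) m (n + k) hx rfl,
      key x y zx hzx zy hzy m n hx hy,
      key _ z _ (center_mul hzx hzy) zz hzz (m + n) k rfl hz,
      Nat.add_assoc, center_assoc3 hzz]
  · intro x y
    obtain ⟨m, -, zx, hzx, hx⟩ := hcyc x
    obtain ⟨n, -, zy, hzy, hy⟩ := hcyc y
    rw [key x y zx hzx zy hzy m n hx hy, key y x zy hzy zx hzx n m hy hx,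
      Nat.add_comm, center_comm hzx]
end

section
/- Let p be a prime and let Q be a right Bol loop of order p³. Then one of the following holds: (i) Z(Q) = {1}; or (ii) Q is an abelian group (· is associative and commutative); or (iii) |Z(Q)| = p and xᵖ ∈ Z(Q) for every x ∈ Q (so that Q/Z(Q) is an elementary abelian group of order p²). -/
section BolHelpers

open scoped Classical

variable {Q : Type*} [QLoop Q]

lemma q_one_mul (x : Q) : 1 * x = x := QLoop.one_mul x
lemma q_mul_one (x : Q) : x * 1 = x := QLoop.mul_one x

lemma q_left_cancel {a b c : Q} (h : a * b = a * c) : b = c := (QLoop.bij_left a).1 h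

lemma Rt_apply (a x : Q) : Rt a x = x * a := rfl

lemma Rt_one : (Rt (1:Q)) = 1 := Equiv.ext fun a => by
  simp [Rt_apply, q_mul_one]

lemma bolR (hbol : IsRightBol Q) (y z : Q) : Rt y * Rt z * Rt y = Rt ((y * z) * y) :=
  Equiv.ext fun a => by
    simp only [Equiv.Perm.mul_apply, Rt_apply]
    exact hbol a y z

lemma lpow_zero (x : Q) : lpow x 0 = 1 := rfl
lemma lpow_succ (x : Q) (n : ℕ) : lpow x (n+1) = lpow x n * x := rfl
lemma lpow_one (x : Q) : lpow x 1 = x := by rw [lpow_succ, lpow_zero, q_one_mul]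

lemma pow_Rt_apply (x : Q) (j k : ℕ) : ((Rt x)^k) (lpow x j) = lpow x (j + k) := by
  induction k with
  | zero => simp
  | succ k ih =>
    rw [pow_succ', Equiv.Perm.mul_apply, ih, Rt_apply, ← lpow_succ, Nat.add_assoc]

lemma Rt_lpow (hbol : IsRightBol Q) (x : Q) (n : ℕ) : (Rt x)^n = Rt (lpow x n) := by
  have key : ∀ n : ℕ, ((Rt x)^n = Rt (lpow x n)) ∧ ((Rt x)^(n+1) = Rt (lpow x (n+1))) := by
    intro n
    induction n with
    | zero =>
      refine ⟨?_, ?_⟩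
      · rw [pow_zero, lpow_zero, Rt_one]
      · rw [pow_one, lpow_one]
    | succ n ih =>
      refine ⟨ih.2, ?_⟩
      have hx : x * lpow x n = lpow x (n+1) := by
        have h := pow_Rt_apply x 1 n
        rw [ih.1, lpow_one, Rt_apply] at h
        rw [h, Nat.add_comm]
      have h2 : (Rt x)^(n+1+1) = Rt x * (Rt x)^n * Rt x := by
        rw [pow_succ, pow_succ']
      rw [h2, ih.1, bolR hbol, hx, ← lpow_succ]
  exact (key n).1

lemma mul_lpow (hbol : IsRightBol Q) (x : Q) (a b : ℕ) :
    lpow x a * lpow x b = lpow x (a + b) := by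
  have h : lpow x a * lpow x b = Rt (lpow x b) (lpow x a) := rfl
  rw [h, ← Rt_lpow hbol, pow_Rt_apply]

lemma rmul_lpow (hbol : IsRightBol Q) (x u : Q) (a b : ℕ) :
    (u * lpow x a) * lpow x b = u * lpow x (a + b) := by
  have h : (u * lpow x a) * lpow x b = Rt (lpow x b) (Rt (lpow x a) u) := rfl
  rw [h, ← Rt_lpow hbol, ← Rt_lpow hbol, ← Equiv.Perm.mul_apply, ← pow_add,
    Nat.add_comm b a, Rt_lpow hbol, Rt_apply]

-- center lemmas
lemma zc_comm {a : Q} (ha : a ∈ loopCenter Q) (y : Q) : a * y = y * a := (ha y 1).1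
lemma zc_a1 {a : Q} (ha : a ∈ loopCenter Q) (y z : Q) : a * (y * z) = (a * y) * z :=
  (ha y z).2.1
lemma zc_a2 {a : Q} (ha : a ∈ loopCenter Q) (y z : Q) : y * (a * z) = (y * a) * z :=
  (ha y z).2.2.1
lemma zc_a3 {a : Q} (ha : a ∈ loopCenter Q) (y z : Q) : y * (z * a) = (y * z) * a :=
  (ha y z).2.2.2

lemma zc_one : (1 : Q) ∈ loopCenter Q := by
  intro y z
  refine ⟨?_, ?_, ?_, ?_⟩ <;> simp [q_one_mul, q_mul_one]

lemma zc_mul {a b : Q} (ha : a ∈ loopCenter Q) (hb : b ∈ loopCenter Q) :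
    a * b ∈ loopCenter Q := by
  intro y z
  refine ⟨?_, ?_, ?_, ?_⟩
  · calc (a*b)*y = a*(b*y) := (zc_a1 ha b y).symm
    _ = a*(y*b) := by rw [zc_comm hb]
    _ = (a*y)*b := zc_a1 ha y b
    _ = (y*a)*b := by rw [zc_comm ha]
    _ = y*(a*b) := (zc_a3 hb y a).symm
  · calc (a*b)*(y*z) = a*(b*(y*z)) := (zc_a1 ha b (y*z)).symm
    _ = a*((b*y)*z) := by rw [zc_a1 hb]
    _ = (a*(b*y))*z := zc_a1 ha (b*y) z
    _ = ((a*b)*y)*z := by rw [zc_a1 ha b y]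
  · calc y*((a*b)*z) = y*(a*(b*z)) := by rw [zc_a1 ha b z]
    _ = (y*a)*(b*z) := zc_a2 ha y (b*z)
    _ = ((y*a)*b)*z := zc_a2 hb (y*a) z
    _ = (y*(a*b))*z := by rw [zc_a3 hb y a]
  · calc y*(z*(a*b)) = y*((z*a)*b) := by rw [zc_a3 hb z a]
    _ = (y*(z*a))*b := zc_a3 hb y (z*a)
    _ = ((y*z)*a)*b := by rw [zc_a3 ha y z]
    _ = (y*z)*(a*b) := (zc_a3 hb (y*z) a).symm

lemma zc_lpow {b : Q} (hb : b ∈ loopCenter Q) (n : ℕ) : lpow b n ∈ loopCenter Q := by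
  induction n with
  | zero => exact zc_one
  | succ n ih => exact zc_mul ih hb

lemma exists_pos_lpow_eq_one [Finite Q] (hbol : IsRightBol Q) (x : Q) :
    ∃ k : ℕ, 0 < k ∧ lpow x k = 1 := by
  obtain ⟨a, b, hne, heq⟩ := Finite.exists_ne_map_eq_of_infinite (fun k : ℕ => lpow x k)
  have key : ∀ a b : ℕ, a < b → lpow x a = lpow x b → ∃ k : ℕ, 0 < k ∧ lpow x k = 1 := by
    intro a b hab h
    refine ⟨b - a, Nat.sub_pos_of_lt hab, ?_⟩
    have h1 : lpow x a * lpow x (b-a) = lpow x a * 1 := by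
      rw [mul_lpow hbol, Nat.add_sub_cancel' hab.le, q_mul_one, h]
    exact q_left_cancel h1
  rcases hne.lt_or_gt with h | h
  · exact key a b h heq
  · exact key b a h heq.symm

lemma zc_erase_left [Finite Q] (hbol : IsRightBol Q) {b c : Q}
    (hb : b ∈ loopCenter Q) (h : b * c ∈ loopCenter Q) : c ∈ loopCenter Q := by
  obtain ⟨k, hk, hbk⟩ := exists_pos_lpow_eq_one hbol b
  have hb' : lpow b (k-1) ∈ loopCenter Q := zc_lpow hb _
  have h1 : lpow b (k-1) * b = 1 := by
    have h2 := mul_lpow hbol b (k-1) 1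
    rw [lpow_one] at h2
    rw [h2, Nat.sub_add_cancel hk]
    exact hbk
  have h3 : lpow b (k-1) * (b * c) = c := by
    rw [zc_a1 hb' b c, h1, q_one_mul]
  rw [← h3]
  exact zc_mul hb' h

lemma zc_erase_right [Finite Q] (hbol : IsRightBol Q) {b c : Q}
    (hb : b ∈ loopCenter Q) (h : c * b ∈ loopCenter Q) : c ∈ loopCenter Q := by
  refine zc_erase_left hbol hb ?_
  rwa [zc_comm hb c]

-- generic counting lemma
lemma card_classes {α : Type*} [Finite α] (s : Setoid α) (c : ℕ)
    (h : ∀ γ : Quotient s, Nat.card {a : α // Quotient.mk s a = γ} = c) :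
    Nat.card α = Nat.card (Quotient s) * c := by
  classical
  have e1 : α ≃ Σ γ : Quotient s, {a : α // Quotient.mk s a = γ} :=
    (Equiv.sigmaFiberEquiv _).symm
  have e2 : (Σ γ : Quotient s, {a : α // Quotient.mk s a = γ}) ≃ (Quotient s) × Fin c :=
    Equiv.trans (Equiv.sigmaCongrRight fun γ => Finite.equivFinOfCardEq (h γ))
      (Equiv.sigmaEquivProd _ _)
  rw [Nat.card_congr (e1.trans e2), Nat.card_prod]
  congr 1
  simp

lemma zcard_dvd [Finite Q] (hbol : IsRightBol Q) :
    Nat.card ↥(loopCenter Q) ∣ Nat.card Q := by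
  classical
  set r : Q → Q → Prop := fun a b => ∃ z, z ∈ loopCenter Q ∧ b = a * z with hr
  have hrefl : ∀ a : Q, r a a := fun a => ⟨1, zc_one, (q_mul_one a).symm⟩
  have hsymm : ∀ {a b : Q}, r a b → r b a := by
    rintro a b ⟨z, hz, rfl⟩
    obtain ⟨k, hk, hzk⟩ := exists_pos_lpow_eq_one hbol z
    refine ⟨lpow z (k-1), zc_lpow hz _, ?_⟩
    have h1 : z * lpow z (k-1) = 1 := by
      have h2 := mul_lpow hbol z 1 (k-1)
      rw [lpow_one] at h2
      rw [h2, Nat.add_sub_cancel' hk]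
      exact hzk
    rw [← zc_a3 (zc_lpow hz (k-1)) a z, h1, q_mul_one]
  have htrans : ∀ {a b c : Q}, r a b → r b c → r a c := by
    rintro a b c ⟨z, hz, rfl⟩ ⟨w, hw, rfl⟩
    exact ⟨z*w, zc_mul hz hw, (zc_a3 hw a z).symm⟩
  set s : Setoid Q := ⟨r, ⟨hrefl, hsymm, htrans⟩⟩ with hs
  have hfib : ∀ γ : Quotient s, Nat.card {a : Q // Quotient.mk s a = γ}
      = Nat.card ↥(loopCenter Q) := by
    intro γ
    refine (Nat.card_congr (Equiv.ofBijective
      (fun z : ↥(loopCenter Q) => (⟨γ.out * z, ?_⟩ : {a : Q // Quotient.mk s a = γ}))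
      ⟨?_, ?_⟩)).symm
    · have h1 : r γ.out (γ.out * z) := ⟨z, z.2, rfl⟩
      have h2 : Quotient.mk s γ.out = Quotient.mk s (γ.out * z) := Quotient.sound h1
      rw [← h2, Quotient.out_eq]
    · intro z w hzw
      exact Subtype.ext (q_left_cancel (congrArg Subtype.val hzw))
    · rintro ⟨a, ha⟩
      have h1 : Quotient.mk s a = Quotient.mk s γ.out := by rw [ha, Quotient.out_eq]
      obtain ⟨z, hz, hza⟩ := hsymm (Quotient.exact h1)
      exact ⟨⟨z, hz⟩, Subtype.ext hza.symm⟩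
  exact ⟨Nat.card (Quotient s), by rw [card_classes s _ hfib, Nat.mul_comm]⟩

lemma rmul_lpow_mod [Finite Q] (hbol : IsRightBol Q) {x : Q} {m : ℕ} (hm0 : 0 < m)
    (hm1 : lpow x m = 1) (u : Q) (k : ℕ) : u * lpow x k = u * lpow x (k % m) := by
  conv_lhs => rw [← Nat.mod_add_div k m]
  rw [← rmul_lpow hbol]
  generalize k / m = q
  induction q with
  | zero => rw [Nat.mul_zero, lpow_zero, q_mul_one]
  | succ q ih =>
    rw [Nat.mul_succ, ← rmul_lpow hbol, hm1, q_mul_one]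
    exact ih

lemma ord_dvd_card [Finite Q] (hbol : IsRightBol Q) (x : Q) {m : ℕ} (hm0 : 0 < m)
    (hm1 : lpow x m = 1) (hmin : ∀ k, 0 < k → lpow x k = 1 → m ≤ k) :
    m ∣ Nat.card Q := by
  classical
  set r : Q → Q → Prop := fun a b => ∃ k : ℕ, b = a * lpow x k with hr
  have hrefl : ∀ a : Q, r a a := fun a => ⟨0, (q_mul_one a).symm⟩
  have hsymm : ∀ {a b : Q}, r a b → r b a := by
    rintro a b ⟨k, rfl⟩
    refine ⟨m - k % m, ?_⟩
    rw [rmul_lpow_mod hbol hm0 hm1 a k, rmul_lpow hbol,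
      Nat.add_sub_cancel' (Nat.mod_lt k hm0).le, hm1, q_mul_one]
  have htrans : ∀ {a b c : Q}, r a b → r b c → r a c := by
    rintro a b c ⟨k, rfl⟩ ⟨l, rfl⟩
    exact ⟨k + l, (rmul_lpow hbol x a k l)⟩
  set s : Setoid Q := ⟨r, ⟨hrefl, hsymm, htrans⟩⟩ with hs
  have hcancel : ∀ (u : Q) (i j : ℕ), i < j → j < m → u * lpow x i = u * lpow x j → False := by
    intro u i j hij hjm h
    have h1 : u * lpow x (i + (m - j)) = u * lpow x m := by
      calc u * lpow x (i + (m - j)) = (u * lpow x i) * lpow x (m - j) :=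
            (rmul_lpow hbol x u i (m - j)).symm
      _ = (u * lpow x j) * lpow x (m - j) := by rw [h]
      _ = u * lpow x (j + (m - j)) := rmul_lpow hbol x u j (m - j)
      _ = u * lpow x m := by rw [Nat.add_sub_cancel' hjm.le]
    rw [hm1, q_mul_one] at h1
    have h2 : u * lpow x (i + (m - j)) = u * lpow x 0 := by
      rw [lpow_zero, q_mul_one]; exact h1
    have h3 : lpow x (i + (m - j)) = lpow x 0 := q_left_cancel h2
    rw [lpow_zero] at h3
    have h4 : 0 < i + (m - j) := by omega
    have h5 : i + (m - j) < m := by omega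
    exact absurd (hmin _ h4 h3) (by omega)
  have hfib : ∀ γ : Quotient s, Nat.card {a : Q // Quotient.mk s a = γ} = m := by
    intro γ
    have e : Fin m ≃ {a : Q // Quotient.mk s a = γ} := by
      refine Equiv.ofBijective
        (fun i : Fin m => (⟨γ.out * lpow x i, ?_⟩ : {a : Q // Quotient.mk s a = γ})) ⟨?_, ?_⟩
      · have h1 : r γ.out (γ.out * lpow x i) := ⟨i, rfl⟩
        have h2 : Quotient.mk s γ.out = Quotient.mk s (γ.out * lpow x i) := Quotient.sound h1
        rw [← h2, Quotient.out_eq]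
      · intro i j hij
        have h := congrArg Subtype.val hij
        simp only at h
        rcases lt_trichotomy (i:ℕ) (j:ℕ) with hlt | heq | hgt
        · exact absurd (hcancel γ.out i j hlt j.2 h) not_false
        · exact Fin.ext heq
        · exact absurd (hcancel γ.out j i hgt i.2 h.symm) not_false
      · rintro ⟨a, ha⟩
        have h1 : Quotient.mk s a = Quotient.mk s γ.out := by rw [ha, Quotient.out_eq]
        obtain ⟨k, hk⟩ := hsymm (Quotient.exact h1)
        refine ⟨⟨k % m, Nat.mod_lt k hm0⟩, Subtype.ext ?_⟩
        simp only
        rw [← rmul_lpow_mod hbol hm0 hm1, ← hk]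
    rw [← Nat.card_congr e]
    simp
  exact ⟨Nat.card (Quotient s), by rw [card_classes s _ hfib, Nat.mul_comm]⟩

lemma shiftS (hbol : IsRightBol Q) {z : Q} (hz : z ∈ loopCenter Q) (x : Q) (i t : ℕ) :
    (lpow x i * z) * lpow x t = lpow x (i+t) * z := by
  rw [← zc_a2 hz (lpow x i) (lpow x t), zc_comm hz (lpow x t),
    zc_a3 hz (lpow x i) (lpow x t), mul_lpow hbol]

lemma mulS (hbol : IsRightBol Q) {z w : Q} (hz : z ∈ loopCenter Q)
    (hw : w ∈ loopCenter Q) (x : Q) (i j : ℕ) :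
    (lpow x i * z) * (lpow x j * w) = lpow x (i+j) * (z*w) := by
  rw [zc_a3 hw (lpow x i * z) (lpow x j), shiftS hbol hz, ← zc_a2 hz (lpow x (i+j)) w]

lemma abelian_of_rep (hbol : IsRightBol Q) (x : Q)
    (hrep : ∀ q : Q, ∃ (i : ℕ) (z : Q), z ∈ loopCenter Q ∧ q = lpow x i * z) :
    (∀ a b c : Q, a * (b * c) = (a * b) * c) ∧ (∀ a b : Q, a * b = b * a) := by
  constructor
  · intro a b c
    obtain ⟨i, z, hz, rfl⟩ := hrep a
    obtain ⟨j, w, hw, rfl⟩ := hrep b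
    obtain ⟨k, v, hv, rfl⟩ := hrep c
    rw [mulS hbol hw hv, mulS hbol hz (zc_mul hw hv), mulS hbol hz hw,
      mulS hbol (zc_mul hz hw) hv, ← Nat.add_assoc, zc_a1 hz w v]
  · intro a b
    obtain ⟨i, z, hz, rfl⟩ := hrep a
    obtain ⟨j, w, hw, rfl⟩ := hrep b
    rw [mulS hbol hz hw, mulS hbol hw hz, Nat.add_comm, zc_comm hz w]

lemma F_injective [Finite Q] (hbol : IsRightBol Q) (x : Q) {m d : ℕ}
    (hm0 : 0 < m) (hm1 : lpow x m = 1)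
    (hdmin : ∀ k, 0 < k → lpow x k ∈ loopCenter Q → d ≤ k)
    (hdm : d ≤ m) :
    Function.Injective
      (fun iz : Fin d × ↥(loopCenter Q) => lpow x (iz.1 : ℕ) * (iz.2 : Q)) := by
  have key : ∀ (i j : Fin d) (z w : ↥(loopCenter Q)), (i:ℕ) ≤ (j:ℕ) →
      lpow x (i:ℕ) * (z:Q) = lpow x (j:ℕ) * (w:Q) → i = j ∧ z = w := by
    intro i j z w hij h
    have hjm : (j:ℕ) ≤ m := le_trans (le_of_lt j.2) hdm
    have h1 : lpow x ((i:ℕ) + (m - (j:ℕ))) * (z:Q) = (w:Q) := by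
      have h2 := congrArg (fun u => u * lpow x (m - (j:ℕ))) h
      rw [shiftS hbol z.2, shiftS hbol w.2, Nat.add_sub_cancel' hjm, hm1, q_one_mul] at h2
      exact h2
    rcases Nat.eq_or_lt_of_le hij with heq | hlt
    · have hieq : (i:ℕ) + (m - (j:ℕ)) = m := by omega
      rw [hieq, hm1, q_one_mul] at h1
      exact ⟨Fin.ext heq, Subtype.ext h1⟩
    · exfalso
      set t : ℕ := (j:ℕ) - (i:ℕ) with ht
      have ht0 : 0 < t := by omega
      have htd : t < d := by omega
      have hexp : (i:ℕ) + (m - (j:ℕ)) = m - t := by omega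
      rw [hexp] at h1
      have hc : lpow x (m - t) ∈ loopCenter Q := by
        refine zc_erase_right hbol z.2 ?_
        rw [h1]; exact w.2
      have hprod : lpow x (m - t) * lpow x t ∈ loopCenter Q := by
        rw [mul_lpow hbol, Nat.sub_add_cancel (by omega : t ≤ m), hm1]
        exact zc_one
      have htZ : lpow x t ∈ loopCenter Q := zc_erase_left hbol hc hprod
      exact absurd (hdmin t ht0 htZ) (by omega)
  rintro ⟨i, z⟩ ⟨j, w⟩ h
  simp only at h
  rcases Nat.le_total (i:ℕ) (j:ℕ) with hle | hle
  · obtain ⟨h1, h2⟩ := key i j z w hle h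
    rw [h1, h2]
  · obtain ⟨h1, h2⟩ := key j i w z hle h.symm
    rw [h1, h2]

lemma zc_lpow_mul_mem [Finite Q] (hbol : IsRightBol Q) {x : Q} {d : ℕ}
    (hd : lpow x d ∈ loopCenter Q) (q : ℕ) : lpow x (d * q) ∈ loopCenter Q := by
  induction q with
  | zero => rw [Nat.mul_zero, lpow_zero]; exact zc_one
  | succ q ih =>
    rw [Nat.mul_succ, ← mul_lpow hbol]
    exact zc_mul ih hd

lemma per_x [Finite Q] (hbol : IsRightBol Q) (x : Q) :
    ∃ d : ℕ, 0 < d ∧ lpow x d ∈ loopCenter Q ∧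
      (∀ k, 0 < k → lpow x k ∈ loopCenter Q → d ≤ k) ∧
      d ∣ Nat.card Q ∧
      d * Nat.card ↥(loopCenter Q) ≤ Nat.card Q ∧
      (d * Nat.card ↥(loopCenter Q) = Nat.card Q →
        (∀ a b c : Q, a * (b * c) = (a * b) * c) ∧ (∀ a b : Q, a * b = b * a)) := by
  classical
  obtain h1 := exists_pos_lpow_eq_one hbol x
  set m : ℕ := Nat.find h1 with hmdef
  obtain ⟨hm0, hm1⟩ : 0 < m ∧ lpow x m = 1 := Nat.find_spec h1
  have hmmin : ∀ k, 0 < k → lpow x k = 1 → m ≤ k := fun k hk h => Nat.find_le ⟨hk, h⟩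
  have h2 : ∃ k : ℕ, 0 < k ∧ lpow x k ∈ loopCenter Q := ⟨m, hm0, by rw [hm1]; exact zc_one⟩
  set d : ℕ := Nat.find h2 with hddef
  obtain ⟨hd0, hdZ⟩ : 0 < d ∧ lpow x d ∈ loopCenter Q := Nat.find_spec h2
  have hdmin : ∀ k, 0 < k → lpow x k ∈ loopCenter Q → d ≤ k := fun k hk h => Nat.find_le ⟨hk, h⟩
  -- d ∣ m
  have hdm : d ∣ m := by
    rcases Nat.eq_zero_or_pos (m % d) with h | h
    · exact Nat.dvd_of_mod_eq_zero h
    · exfalso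
      have hq : lpow x (d * (m / d)) ∈ loopCenter Q := zc_lpow_mul_mem hbol hdZ _
      have hprod : lpow x (d * (m / d)) * lpow x (m % d) ∈ loopCenter Q := by
        rw [mul_lpow hbol, Nat.div_add_mod m d, hm1]
        exact zc_one
      have hmod : lpow x (m % d) ∈ loopCenter Q := zc_erase_left hbol hq hprod
      exact absurd (hdmin _ h hmod) (by
        have := Nat.mod_lt m hd0
        omega)
  have hdlem : d ≤ m := Nat.le_of_dvd hm0 hdm
  have hmdvd : m ∣ Nat.card Q := ord_dvd_card hbol x hm0 hm1 hmmin
  have hddvd : d ∣ Nat.card Q := hdm.trans hmdvd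
  have hinj := F_injective hbol x hm0 hm1 hdmin hdlem
  have hle : d * Nat.card ↥(loopCenter Q) ≤ Nat.card Q := by
    have := Nat.card_le_card_of_injective _ hinj
    rwa [Nat.card_prod, Nat.card_eq_fintype_card, Fintype.card_fin] at this
  refine ⟨d, hd0, hdZ, hdmin, hddvd, hle, ?_⟩
  intro hcardeq
  have hfintQ : Fintype Q := Fintype.ofFinite Q
  have hfintP : Fintype (Fin d × ↥(loopCenter Q)) := Fintype.ofFinite _
  have hcards : Fintype.card (Fin d × ↥(loopCenter Q)) = Fintype.card Q := by
    rw [← Nat.card_eq_fintype_card, ← Nat.card_eq_fintype_card, Nat.card_prod,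
      Nat.card_eq_fintype_card (α := Fin d), Fintype.card_fin]
    exact hcardeq
  have hbij := (Fintype.bijective_iff_injective_and_card _).2 ⟨hinj, hcards⟩
  refine abelian_of_rep hbol x (fun q => ?_)
  obtain ⟨⟨i, z⟩, hF⟩ := hbij.2 q
  exact ⟨i, z, z.2, hF.symm⟩

end BolHelpers

/-- A right Bol loop of order p^3 has trivial center, or is an abelian
group, or has center of order p with Q/Z(Q) elementary abelian of order p^2. -/
theorem stmt1 (p : ℕ) (hp : p.Prime) (Q : Type*) [QLoop Q]
    (hbol : IsRightBol Q) (hcard : Nat.card Q = p ^ 3) :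
    loopCenter Q = {1} ∨
    ((∀ x y z : Q, x * (y * z) = (x * y) * z) ∧ (∀ x y : Q, x * y = y * x)) ∨
    ((loopCenter Q).ncard = p ∧ ∀ x : Q, lpow x p ∈ loopCenter Q) := by
  classical
  have hfin : Finite Q := Nat.finite_of_card_ne_zero (by
    rw [hcard]; exact (Nat.pow_pos hp.pos).ne')
  have hzdvd : Nat.card ↥(loopCenter Q) ∣ p ^ 3 := hcard ▸ zcard_dvd hbol
  obtain ⟨i, hi3, hzc⟩ := (Nat.dvd_prime_pow hp).1 hzdvd
  have hp2 : 2 ≤ p := hp.two_le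
  interval_cases i
  · -- |Z| = 1
    left
    have h1 : (loopCenter Q).ncard = 1 := by
      rw [← Nat.card_coe_set_eq, hzc, pow_zero]
    obtain ⟨a, ha⟩ := Set.ncard_eq_one.1 h1
    have h2 : (1:Q) ∈ loopCenter Q := zc_one
    rw [ha] at h2 ⊢
    rw [Set.mem_singleton_iff] at h2
    rw [h2]
  · -- |Z| = p
    by_cases hall : ∀ x : Q, lpow x p ∈ loopCenter Q
    · right; right
      exact ⟨by rw [← Nat.card_coe_set_eq, hzc, pow_one], hall⟩
    · right; left
      push_neg at hall
      obtain ⟨x, hx⟩ := hall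
      obtain ⟨d, hd0, hdZ, hdmin, hddvd, hdle, habel⟩ := per_x hbol x
      rw [hcard] at hddvd hdle habel
      rw [hzc] at hdle habel
      have hdp2 : d ≤ p^2 := by
        rw [pow_one] at hdle
        rw [show (3:ℕ) = 2+1 from rfl, pow_succ] at hdle
        exact Nat.le_of_mul_le_mul_right hdle hp.pos
      obtain ⟨j, hj3, hdj⟩ := (Nat.dvd_prime_pow hp).1 hddvd
      have hj2 : j ≤ 2 := by
        refine (Nat.pow_le_pow_iff_right hp.one_lt).mp ?_
        rw [← hdj]; exact hdp2
      have hj_eq : j = 2 := by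
        by_contra hcon
        have hj1 : j ≤ 1 := by omega
        have hdvp : d ∣ p := by
          have h := pow_dvd_pow p hj1
          rw [pow_one, ← hdj] at h
          exact h
        have hmem := zc_lpow_mul_mem hbol hdZ (p / d)
        rw [Nat.mul_div_cancel' hdvp] at hmem
        exact hx hmem
      refine habel ?_
      rw [hdj, hj_eq]; ring
  · -- |Z| = p^2
    right; left
    have hex : ∃ x : Q, x ∉ loopCenter Q := by
      by_contra h
      push_neg at h
      have huniv : loopCenter Q = Set.univ := Set.eq_univ_of_forall h
      have h2 : Nat.card ↥(loopCenter Q) = Nat.card Q := by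
        rw [huniv]; exact Nat.card_congr (Equiv.Set.univ Q)
      rw [hzc, hcard] at h2
      have h3 : p^2 < p^3 := Nat.pow_lt_pow_right hp.one_lt (by norm_num)
      omega
    obtain ⟨x, hx⟩ := hex
    obtain ⟨d, hd0, hdZ, hdmin, hddvd, hdle, habel⟩ := per_x hbol x
    rw [hcard] at hddvd hdle habel
    rw [hzc] at hdle habel
    have hd1 : 1 < d := by
      rcases Nat.lt_or_ge 1 d with h | h
      · exact h
      · exfalso
        have hd_eq : d = 1 := by omega
        rw [hd_eq, lpow_one] at hdZ
        exact hx hdZ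
    have hdlep : d ≤ p := by
      have h := hdle
      rw [show (3:ℕ) = 1+2 from rfl, pow_add, pow_one] at h
      exact Nat.le_of_mul_le_mul_right h (Nat.pow_pos hp.pos)
    obtain ⟨j, hj3, hdj⟩ := (Nat.dvd_prime_pow hp).1 hddvd
    have hj1 : j = 1 := by
      have hge : 1 ≤ j := by
        by_contra h
        push_neg at h
        have : j = 0 := by omega
        rw [this, pow_zero] at hdj
        omega
      have hle : j ≤ 1 := by
        refine (Nat.pow_le_pow_iff_right hp.one_lt).mp ?_
        rw [← hdj]
        simpa using hdlep
      omega
    refine habel ?_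
    rw [hdj, hj1]; ring
  · -- |Z| = p^3
    right; left
    have hzn : (loopCenter Q).ncard = p^3 := by
      rw [← Nat.card_coe_set_eq, hzc]
    have huniv : loopCenter Q = Set.univ := by
      refine Set.eq_of_subset_of_ncard_le (Set.subset_univ _) ?_ Set.finite_univ
      rw [Set.ncard_univ, hcard, hzn]
    have hmem : ∀ a : Q, a ∈ loopCenter Q := by
      intro a; rw [huniv]; trivial
    exact ⟨fun a b c => zc_a1 (hmem a) b c, fun a b => zc_comm (hmem a) b⟩
end

section
/- Let Q be a finite right Bol loop of odd order and let c ∈ Nucₗ(Q) be an element with c ≠ 1 and (c·c)·c = 1 (so that H = {1, c, c·c} is a subgroup of Nucₗ(Q) of order 3). Suppose that for every x ∈ Q the element T_x(c) belongs to H, where T_x(c) denotes the unique z ∈ Q with x·z = c·x. Then c ∈ C(Q), i.e., c·y = y·c for all y ∈ Q. -/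
/-- In a finite right Bol loop of odd order, if c generates a subgroup
H = {1, c, c*c} of order 3 inside the left nucleus and H is invariant under all
mappings T_x, then c lies in the commutant. -/
theorem stmt8 (Q : Type*) [QLoop Q] [Finite Q] (hbol : IsRightBol Q)
    (hodd : Odd (Nat.card Q)) (c : Q) (hc : c ∈ leftNucleus Q) (hc1 : c ≠ 1)
    (hc3 : (c * c) * c = 1)
    (hT : ∀ x z : Q, x * z = c * x → z ∈ ({1, c, c * c} : Set Q)) :
    ∀ y : Q, c * y = y * c := by
  classical
  have rinj : ∀ a : Q, Function.Injective (fun x : Q => x * a) :=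
    fun a => (QLoop.bij_right a).1
  have linj : ∀ a : Q, Function.Injective (fun x : Q => a * x) :=
    fun a => (QLoop.bij_left a).1
  -- R_c has order 3
  have h1 : ∀ a : Q, ((a * c) * c) * c = a := by
    intro a
    have h := hbol a c c
    rwa [hc3, QLoop.mul_one] at h
  have bol1 : ∀ a : Q, (a * c) * c = a * (c * c) := by
    intro a
    have h := hbol a c 1
    rwa [QLoop.mul_one, QLoop.mul_one] at h
  -- classification of every element
  have hclass : ∀ y : Q, c * y = y * c ∨ c * y = (y * c) * c := by
    intro y
    obtain ⟨z, hz⟩ := (QLoop.bij_left y).2 (c * y)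
    have hz' := hT y z hz
    dsimp only at hz
    simp only [Set.mem_insert_iff, Set.mem_singleton_iff] at hz'
    rcases hz' with h | h | h
    · exfalso
      rw [h, QLoop.mul_one] at hz
      have h2 : (fun a : Q => a * y) c = (fun a : Q => a * y) 1 := by
        dsimp only; rw [QLoop.one_mul]; exact hz.symm
      exact hc1 (rinj y h2)
    · left; rw [h] at hz; exact hz.symm
    · right; rw [h] at hz; rw [← hz, ← bol1]
  by_contra hcon
  push_neg at hcon
  obtain ⟨x, hx⟩ := hcon
  have hxB : c * x = (x * c) * c := (hclass x).resolve_left hx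
  have cxc : (c * x) * c = x := by rw [hxB]; exact h1 x
  -- if y ∈ A then y*x ∈ B
  have stepAB : ∀ y : Q, c * y = y * c → c * (y * x) = ((y * x) * c) * c := by
    intro y hy
    have e1 : (c * (y * x)) * c = y * x := by
      have h2 : c * (y * x) = (y * c) * x := by rw [hc y x, hy]
      have h3 := hbol y c x
      rw [cxc] at h3
      rw [h2, h3]
    apply rinj c
    show (c * (y * x)) * c = (((y * x) * c) * c) * c
    rw [e1, h1]
  -- if y ∈ B then y*x ∈ A
  have stepBA : ∀ y : Q, c * y = (y * c) * c → c * (y * x) = (y * x) * c := by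
    intro y hy
    have e1 : ((c * (y * x)) * c) * c = y * x := by
      have h2 : c * (y * x) = ((y * c) * c) * x := by rw [hc y x, hy]
      have h3 := hbol (y * c) c x
      rw [cxc] at h3
      have h4 := hbol y c x
      rw [cxc] at h4
      rw [h2, h3, h4]
    apply rinj c
    apply rinj c
    show ((c * (y * x)) * c) * c = (((y * x) * c) * c) * c
    rw [e1, h1]
  -- counting
  have : Fintype Q := Fintype.ofFinite Q
  set s : Finset Q := Finset.univ.filter (fun y => c * y = y * c) with hs
  set t : Finset Q := Finset.univ.filter (fun y => c * y = (y * c) * c) with ht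
  have hmems : ∀ y : Q, y ∈ s ↔ c * y = y * c := by
    intro y; simp [hs]
  have hmemt : ∀ y : Q, y ∈ t ↔ c * y = (y * c) * c := by
    intro y; simp [ht]
  have hdisj : Disjoint s t := by
    rw [Finset.disjoint_left]
    intro y hys hyt
    rw [hmems] at hys
    rw [hmemt] at hyt
    have key : y * c = (y * c) * c := hys.symm.trans hyt
    have h2 : (fun a : Q => (y * c) * a) 1 = (fun a : Q => (y * c) * a) c := by
      dsimp only; rw [QLoop.mul_one]; exact key
    exact hc1 (linj (y * c) h2).symm
  have hunion : s ∪ t = Finset.univ := by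
    apply Finset.eq_univ_iff_forall.2
    intro y
    rcases hclass y with h | h
    · exact Finset.mem_union_left _ ((hmems y).2 h)
    · exact Finset.mem_union_right _ ((hmemt y).2 h)
  have hle1 : s.card ≤ t.card := by
    apply Finset.card_le_card_of_injOn (fun y => y * x)
    · intro y hy
      exact (hmemt _).2 (stepAB y ((hmems y).1 hy))
    · exact fun a _ b _ h => rinj x h
  have hle2 : t.card ≤ s.card := by
    apply Finset.card_le_card_of_injOn (fun y => y * x)
    · intro y hy
      exact (hmems _).2 (stepBA y ((hmemt y).1 hy))
    · exact fun a _ b _ h => rinj x h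
  have hcardQ : Nat.card Q = 2 * s.card := by
    rw [Nat.card_eq_fintype_card, ← Finset.card_univ, ← hunion,
      Finset.card_union_of_disjoint hdisj, ← Nat.le_antisymm hle1 hle2, two_mul]
  rw [hcardQ] at hodd
  exact Nat.not_odd_iff_even.mpr (even_two_mul _) hodd
end

section
/- Let Q be a right Bol loop, let c ∈ Nucₗ(Q) and let c' ∈ Q satisfy c·c' = c'·c = 1. If a ∈ Q satisfies c·a = a·c', then c·(a·a) = (a·a)·c. -/
/-- In a right Bol loop, if c is in the left nucleus with two-sided
inverse c' and c*a = a*c', then c commutes with a*a. -/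
theorem stmt14 (Q : Type*) [QLoop Q] (hbol : IsRightBol Q)
    (c c' : Q) (hc : c ∈ leftNucleus Q) (hcc' : c * c' = 1) (hc'c : c' * c = 1)
    (a : Q) (ha : c * a = a * c') :
    c * (a * a) = (a * a) * c := by
  have linj : Function.Injective (fun x : Q => c * x) := (QLoop.bij_left c).1
  have rinj : Function.Injective (fun x : Q => x * c') := (QLoop.bij_right c').1
  -- c * (c' * x) = x
  have h1 : ∀ x : Q, c * (c' * x) = x := fun x => by
    rw [hc c' x, hcc', QLoop.one_mul]
  -- (x * c') * c = x
  have h2 : ∀ x : Q, (x * c') * c = x := fun x => by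
    have := hbol x c' c
    rw [hc'c, QLoop.one_mul] at this
    exact rinj this
  -- (c' * a) * c' = a
  have h3 : (c' * a) * c' = a := by
    have := hbol c c' a
    rw [hcc', QLoop.one_mul, ← ha] at this
    exact linj this.symm
  -- main computation
  have h4 : ((a * c') * a) * c' = a * a := by
    have := hbol a c' a
    rw [h3] at this
    exact this
  have h5 : c * (a * a) = (a * c') * a := by
    rw [hc a a, ha]
  rw [h5, ← h4, h2]
end

section
/- Let Q be a right Bol loop, let c ∈ Nucₗ(Q) and let c' ∈ Q satisfy c·c' = c'·c = 1. If a ∈ Q satisfies c·a = a·c and c·(a·a) = (a·a)·c', then c·c = 1. -/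
/-- In a right Bol loop, if c is in the left nucleus with two-sided
inverse c', c commutes with a, and c*(a*a) = (a*a)*c', then c*c = 1. -/
theorem stmt15 (Q : Type*) [QLoop Q] (hbol : IsRightBol Q)
    (c c' : Q) (hc : c ∈ leftNucleus Q) (hcc' : c * c' = 1) (hc'c : c' * c = 1)
    (a : Q) (ha : c * a = a * c) (ha2 : c * (a * a) = (a * a) * c') :
    c * c = 1 := by
  have linj : ∀ x : Q, Function.Injective (fun y : Q => x * y) :=
    fun x => (QLoop.bij_left x).injective
  have rinj : ∀ x : Q, Function.Injective (fun y : Q => y * x) :=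
    fun x => (QLoop.bij_right x).injective
  -- (x * c') * c = x
  have hrc : ∀ x : Q, (x * c') * c = x := by
    intro x
    have h := hbol x c' c
    rw [hc'c, QLoop.one_mul] at h
    exact rinj c' h
  -- key computation
  have h1 : ((a * c) * a) * c = a * a := by
    have : (a * c) * a = (a * a) * c' := by
      rw [← ha, ← hc a a, ha2]
    rw [this, hrc]
  have h2 : ((a * c) * a) * c = a * ((c * a) * c) := hbol a c a
  have h3 : a * ((a * c) * c) = a * a := by rw [← ha, ← h2, h1]
  have h4 : (a * c) * c = a * (c * c) := by
    have h := hbol a c 1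
    rw [QLoop.mul_one, QLoop.mul_one] at h
    exact h
  have h5 : a * (a * (c * c)) = a * a := by rw [← h4, h3]
  have h6 : a * (c * c) = a := linj a h5
  have h7 : a * (c * c) = a * 1 := by rw [QLoop.mul_one, h6]
  exact linj a h7
end
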